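/- Fix integers k ≥ 2 and d ≥ 3 and set L := (k−1)(d−1). For every real p with 0 ≤ p < 1 − 1/L, the number Q := R(p)^{k−1} is the unique solution in [0,1) of the equation Q = (p + (1−p)·Q^{d−1})^{k−1}. -/

import Mathlib

/-- Uniqueness of fixed points of `t ↦ p + (1-p) t^L` in `[0,1)`. -/
lemma fp_uniq {L : ℕ} (hL2 : 2 ≤ L) {p : ℝ} (hp0 : 0 ≤ p) (hp1 : p < 1)
    {x y : ℝ} (hx : x ∈ Set.Ico (0:ℝ) 1) (hy : y ∈ Set.Ico (0:ℝ) 1)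
    (hfx : x = p + (1-p) * x^L) (hfy : y = p + (1-p) * y^L) : x = y := by
  -- key : if a < b both fixed points in [0,1) then contradiction
  have key : ∀ a b : ℝ, a ∈ Set.Ico (0:ℝ) 1 → b ∈ Set.Ico (0:ℝ) 1 →
      a = p + (1-p) * a^L → b = p + (1-p) * b^L → a < b → False := by
    intro a b ha hb hfa hfb hab
    set lam : ℝ := (1 - b) / (1 - a) with hlam
    set mu : ℝ := (b - a) / (1 - a) with hmu
    have ha1 : (0:ℝ) < 1 - a := by linarith [ha.2]
    have hlam0 : 0 < lam := div_pos (by linarith [hb.2]) ha1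
    have hmu0 : 0 < mu := div_pos (by linarith) ha1
    have hsum : lam + mu = 1 := by rw [hlam, hmu, ← add_div]; field_simp; ring
    have hcomb : lam * a + mu * 1 = b := by rw [hlam, hmu]; field_simp; ring
    have hsc := strictConvexOn_pow hL2
    have := hsc.2 (Set.mem_Ici.mpr ha.1) (Set.mem_Ici.mpr (by norm_num : (0:ℝ) ≤ 1))
      (ne_of_lt (lt_of_lt_of_le hab (le_of_lt hb.2))) hlam0 hmu0 hsum
    simp only [smul_eq_mul, one_pow] at this
    rw [hcomb] at this
    have hb' : b < lam * (p + (1-p)*a^L) + mu := by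
      calc b = p + (1-p) * b^L := hfb
        _ < p + (1-p) * (lam * a^L + mu * 1) := by
            have : (0:ℝ) < 1 - p := by linarith
            nlinarith
        _ = lam * (p + (1-p)*a^L) + mu := by nlinarith [hsum]
    rw [← hfa] at hb'
    nlinarith [hcomb]
  rcases lt_trichotomy x y with h | h | h
  · exact absurd (key x y hx hy hfx hfy h) (by simp)
  · exact h
  · exact absurd (key y x hy hx hfy hfx h) (by simp)

/-- With `L = (k-1)(d-1)` and `R p` the unique root in `[0,1)` of
`x = p + (1-p) x^L`, the number `Q := (R p)^(k-1)` is the unique solution in `[0,1)`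
of `Q = (p + (1-p) Q^(d-1))^(k-1)`. -/
theorem stmt_1 (k d : ℕ) (hk : 2 ≤ k) (hd : 3 ≤ d) (L : ℕ) (hL : L = (k-1)*(d-1))
    (R : ℝ → ℝ)
    (hR : ∀ p : ℝ, 0 ≤ p → p < 1 - 1/(L:ℝ) →
      R p ∈ Set.Ico (0:ℝ) 1 ∧ R p = p + (1-p) * (R p)^L)
    (p : ℝ) (hp0 : 0 ≤ p) (hp1 : p < 1 - 1/(L:ℝ)) :
    (R p)^(k-1) ∈ Set.Ico (0:ℝ) 1 ∧
    (R p)^(k-1) = (p + (1-p) * ((R p)^(k-1))^(d-1))^(k-1) ∧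
    (∀ Q ∈ Set.Ico (0:ℝ) 1, Q = (p + (1-p) * Q^(d-1))^(k-1) → Q = (R p)^(k-1)) := by
  have hL2 : 2 ≤ L := by
    rw [hL]
    have h1 : 1 ≤ k - 1 := by omega
    have h2 : 2 ≤ d - 1 := by omega
    calc 2 = 1 * 2 := by norm_num
      _ ≤ (k-1) * (d-1) := Nat.mul_le_mul h1 h2
  have hLpos : (0:ℝ) < L := by exact_mod_cast (by omega : 0 < L)
  have hp1' : p < 1 := by
    have : 0 < 1/(L:ℝ) := by positivity
    linarith
  obtain ⟨hRmem, hRfix⟩ := hR p hp0 hp1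
  have hpowL : ((R p)^(k-1))^(d-1) = (R p)^L := by rw [← pow_mul, hL]
  refine ⟨⟨pow_nonneg hRmem.1 _, pow_lt_one₀ hRmem.1 hRmem.2 (by omega)⟩, ?_, ?_⟩
  · rw [hpowL, ← hRfix]
  · intro Q hQ hQeq
    set x : ℝ := p + (1-p) * Q^(d-1) with hx
    have hQx : Q = x^(k-1) := hQeq
    have hx0 : 0 ≤ x := by
      have : 0 ≤ Q^(d-1) := pow_nonneg hQ.1 _
      nlinarith
    have hx1 : x < 1 := by
      by_contra h
      push_neg at h
      have : (1:ℝ) ≤ x^(k-1) := one_le_pow₀ h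
      linarith [hQ.2, hQx ▸ this]
    have hxL : x^L = Q^(d-1) := by rw [hL, pow_mul, ← hQx]
    have hxfix : x = p + (1-p) * x^L := by rw [hxL]
    have := fp_uniq hL2 hp0 hp1' ⟨hx0, hx1⟩ hRmem hxfix hRfix
    rw [hQx, this]
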